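/- arXiv:2205.03157 — 2 statements merged into one kernel-verified Lean document; each statement's English description precedes it below -/
import Mathlib

section
/- Let P ⊂ ℂ be a finite set of t > 1 points, and let δ(P) denote the minimal Euclidean distance between two distinct points of P. Then δ(P) < (2/√t) · diam(P). -/
lemma cell_close (D : ℝ) (hD : 0 < D) (m : ℕ) (hm : 0 < m) (a b : ℝ)
    (ha0 : 0 ≤ a) (haD : a ≤ D) (hb0 : 0 ≤ b) (hbD : b ≤ D)
    (h : min (m - 1) ⌊(m : ℝ) * a / D⌋₊ = min (m - 1) ⌊(m : ℝ) * b / D⌋₊) :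
    |a - b| ≤ D / m := by
  set u : ℝ := (m : ℝ) * a / D with hu
  set v : ℝ := (m : ℝ) * b / D with hv
  have hmpos : (0:ℝ) < m := by exact_mod_cast hm
  have hu0 : 0 ≤ u := by positivity
  have hv0 : 0 ≤ v := by positivity
  have hum : u ≤ m := by
    rw [hu, div_le_iff₀ hD]
    nlinarith
  have hvm : v ≤ m := by
    rw [hv, div_le_iff₀ hD]
    nlinarith
  have key : |u - v| ≤ 1 := by
    obtain ⟨c, hc⟩ : ∃ c : ℝ, c ≤ u ∧ u ≤ c + 1 ∧ c ≤ v ∧ v ≤ c + 1 := by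
      rcases lt_or_ge (min (m - 1) ⌊u⌋₊) (m - 1) with hlt | hge
      · have h1 : ⌊u⌋₊ = min (m - 1) ⌊u⌋₊ := by omega
        have h2 : ⌊v⌋₊ = min (m - 1) ⌊u⌋₊ := by omega
        refine ⟨(⌊u⌋₊ : ℝ), Nat.floor_le hu0, le_of_lt (Nat.lt_floor_add_one u), ?_, ?_⟩
        · rw [show (⌊u⌋₊:ℝ) = (⌊v⌋₊:ℝ) by exact_mod_cast by omega]
          exact Nat.floor_le hv0
        · rw [show (⌊u⌋₊:ℝ) = (⌊v⌋₊:ℝ) by exact_mod_cast by omega]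
          exact le_of_lt (Nat.lt_floor_add_one v)
      · have h1 : m - 1 ≤ ⌊u⌋₊ := by omega
        have h2 : m - 1 ≤ ⌊v⌋₊ := by omega
        have hcu : ((m-1 : ℕ) : ℝ) ≤ u := (Nat.le_floor_iff hu0).mp h1
        have hcv : ((m-1 : ℕ) : ℝ) ≤ v := (Nat.le_floor_iff hv0).mp h2
        have hcast : ((m-1 : ℕ) : ℝ) + 1 = m := by
          have : (1:ℕ) ≤ m := hm
          push_cast [Nat.cast_sub this]
          ring
        exact ⟨((m-1:ℕ):ℝ), hcu, by rw [hcast]; exact hum, hcv, by rw [hcast]; exact hvm⟩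
    rw [abs_sub_le_iff]
    constructor <;> linarith [hc.1, hc.2.1, hc.2.2.1, hc.2.2.2]
  have hab : a - b = (u - v) * (D / m) := by
    field_simp [hu, hv]
    rw [hu, hv, ← sub_div, div_mul_cancel₀ _ hD.ne']; ring
  rw [hab, abs_mul, abs_of_pos (by positivity : (0:ℝ) < D / m)]
  nlinarith [abs_nonneg (u - v), div_pos hD hmpos]

lemma dist_sq_complex (x y : ℂ) :
    dist x y ^ 2 = (x.re - y.re) ^ 2 + (x.im - y.im) ^ 2 := by
  rw [Complex.dist_eq_re_im, Real.sq_sqrt (by positivity)]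

lemma num_est (D s : ℝ) (m n t : ℕ) (dr di : ℝ) (hD : 0 < D)
    (hm : 0 < m) (hn : 0 < n) (ht : 0 < t)
    (hspos : 0 < s) (hs2 : s ^ 2 = t)
    (hre : |dr| ≤ D / m) (him : |di| ≤ D / n)
    (hineq : ((m:ℝ) ^ 2 + (n:ℝ) ^ 2) * t < 4 * ((m:ℝ) ^ 2 * (n:ℝ) ^ 2)) :
    dr ^ 2 + di ^ 2 < (2 / s * D) ^ 2 := by
  have hmpos : (0:ℝ) < m := by exact_mod_cast hm
  have hnpos : (0:ℝ) < n := by exact_mod_cast hn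
  have h2 : dr ^ 2 ≤ (D / m) ^ 2 := by
    have h := abs_le.mp hre
    nlinarith [h.1, h.2]
  have h3 : di ^ 2 ≤ (D / n) ^ 2 := by
    have h := abs_le.mp him
    nlinarith [h.1, h.2]
  have h4 : (D / m) ^ 2 + (D / n) ^ 2 < (2 / s * D) ^ 2 := by
    rw [div_pow, div_pow, div_add_div _ _ (by positivity) (by positivity), mul_pow,
      div_pow, div_mul_eq_mul_div, div_lt_div_iff₀ (by positivity) (by positivity)]
    have hD2 : 0 < D ^ 2 := by positivity
    rw [hs2]
    nlinarith [mul_lt_mul_of_pos_left hineq hD2]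
  linarith

lemma grid_lemma (P : Finset ℂ) (t m n : ℕ) (hm : 0 < m) (hn : 0 < n)
    (hcard : P.card = t) (hmn : m * n < t)
    (hineq : (m ^ 2 + n ^ 2) * t < 4 * (m ^ 2 * n ^ 2)) :
    ∃ x ∈ P, ∃ y ∈ P, x ≠ y ∧
      dist x y < 2 / Real.sqrt t * Metric.diam (P : Set ℂ) := by
  have ht2 : 2 ≤ t := by nlinarith
  have hne : P.Nonempty := by
    rw [← Finset.card_pos, hcard]; omega
  have hbd : Bornology.IsBounded (P : Set ℂ) := (P.finite_toSet).isBounded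
  set D := Metric.diam (P : Set ℂ) with hDdef
  have hdle : ∀ p ∈ P, ∀ q ∈ P, dist p q ≤ D := fun p hp q hq =>
    Metric.dist_le_diam_of_mem hbd hp hq
  have hD : 0 < D := by
    obtain ⟨x, hx, y, hy, hxy⟩ := Finset.one_lt_card.mp (by omega : 1 < P.card)
    calc (0:ℝ) < dist x y := dist_pos.mpr hxy
    _ ≤ D := hdle x hx y hy
  have hneim : (P.image Complex.re).Nonempty := hne.image _
  have hneim' : (P.image Complex.im).Nonempty := hne.image _
  set x₀ := (P.image Complex.re).min' hneim with hx₀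
  set y₀ := (P.image Complex.im).min' hneim' with hy₀
  have hx₀le : ∀ p ∈ P, x₀ ≤ p.re := fun p hp =>
    Finset.min'_le _ _ (Finset.mem_image_of_mem _ hp)
  have hy₀le : ∀ p ∈ P, y₀ ≤ p.im := fun p hp =>
    Finset.min'_le _ _ (Finset.mem_image_of_mem _ hp)
  obtain ⟨qx, hqx, hqxre⟩ := Finset.mem_image.mp ((P.image Complex.re).min'_mem hneim)
  obtain ⟨qy, hqy, hqyim⟩ := Finset.mem_image.mp ((P.image Complex.im).min'_mem hneim')
  have hreD : ∀ p ∈ P, p.re - x₀ ≤ D := by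
    intro p hp
    have h1 : p.re - qx.re ≤ |(p - qx).re| := by
      rw [Complex.sub_re]; exact le_abs_self _
    have h2 : |(p - qx).re| ≤ ‖p - qx‖ := Complex.abs_re_le_norm _
    have h3 : ‖p - qx‖ = dist p qx := (Complex.dist_eq p qx).symm
    have := hdle p hp qx hqx
    rw [hx₀, ← hqxre]; linarith
  have himD : ∀ p ∈ P, p.im - y₀ ≤ D := by
    intro p hp
    have h1 : p.im - qy.im ≤ |(p - qy).im| := by
      rw [Complex.sub_im]; exact le_abs_self _
    have h2 : |(p - qy).im| ≤ ‖p - qy‖ := Complex.abs_im_le_norm _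
    have h3 : ‖p - qy‖ = dist p qy := (Complex.dist_eq p qy).symm
    have := hdle p hp qy hqy
    rw [hy₀, ← hqyim]; linarith
  obtain ⟨p, hp, q, hq, hpq, hfeq⟩ :=
    Finset.exists_ne_map_eq_of_card_lt_of_maps_to
      (s := P) (t := Finset.range m ×ˢ Finset.range n)
      (f := fun p => (min (m - 1) ⌊(m : ℝ) * (p.re - x₀) / D⌋₊,
        min (n - 1) ⌊(n : ℝ) * (p.im - y₀) / D⌋₊))
      (by rw [Finset.card_product, Finset.card_range, Finset.card_range, hcard]; exact hmn)
      (by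
        intro a _
        rw [Finset.mem_coe, Finset.mem_product, Finset.mem_range, Finset.mem_range]
        exact ⟨lt_of_le_of_lt (min_le_left _ _) (by omega),
          lt_of_le_of_lt (min_le_left _ _) (by omega)⟩)
  refine ⟨p, hp, q, hq, hpq, ?_⟩
  have hfeq1 : min (m - 1) ⌊(m : ℝ) * (p.re - x₀) / D⌋₊
      = min (m - 1) ⌊(m : ℝ) * (q.re - x₀) / D⌋₊ := congrArg Prod.fst hfeq
  have hfeq2 : min (n - 1) ⌊(n : ℝ) * (p.im - y₀) / D⌋₊
      = min (n - 1) ⌊(n : ℝ) * (q.im - y₀) / D⌋₊ := congrArg Prod.snd hfeq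
  have hre : |(p.re - x₀) - (q.re - x₀)| ≤ D / m :=
    cell_close D hD m hm _ _ (by linarith [hx₀le p hp]) (hreD p hp)
      (by linarith [hx₀le q hq]) (hreD q hq) hfeq1
  have him : |(p.im - y₀) - (q.im - y₀)| ≤ D / n :=
    cell_close D hD n hn _ _ (by linarith [hy₀le p hp]) (himD p hp)
      (by linarith [hy₀le q hq]) (himD q hq) hfeq2
  have hre' : |p.re - q.re| ≤ D / m := by convert hre using 2; ring
  have him' : |p.im - q.im| ≤ D / n := by convert him using 2; ring
  have htpos : 0 < t := by omega
  have htposR : (0:ℝ) < t := by exact_mod_cast htpos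
  have hspos : 0 < Real.sqrt t := Real.sqrt_pos.mpr htposR
  have hs2 : Real.sqrt t ^ 2 = t := Real.sq_sqrt (le_of_lt htposR)
  have hineqR : ((m:ℝ) ^ 2 + (n:ℝ) ^ 2) * t < 4 * ((m:ℝ) ^ 2 * (n:ℝ) ^ 2) := by
    exact_mod_cast hineq
  have hsq : dist p q ^ 2 < (2 / Real.sqrt t * D) ^ 2 := by
    rw [dist_sq_complex p q]
    exact num_est D (Real.sqrt t) m n t _ _ hD hm hn htpos hspos hs2 hre' him' hineqR
  exact lt_of_pow_lt_pow_left₀ 2 (by positivity) hsq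

lemma dist_sq_complex' (x y : ℂ) :
    (x.re - y.re) ^ 2 + (x.im - y.im) ^ 2 = dist x y ^ 2 := by
  rw [Complex.dist_eq_re_im, Real.sq_sqrt (by positivity)]

lemma no_equilateral_coords (b1 b2 c1 c2 d1 d2 r : ℝ) (hr : 0 < r)
    (Hab : b1 ^ 2 + b2 ^ 2 = r ^ 2) (Hac : c1 ^ 2 + c2 ^ 2 = r ^ 2)
    (Had : d1 ^ 2 + d2 ^ 2 = r ^ 2)
    (Hbc : (b1 - c1) ^ 2 + (b2 - c2) ^ 2 = r ^ 2)
    (Hbd : (b1 - d1) ^ 2 + (b2 - d2) ^ 2 = r ^ 2)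
    (Hcd : (c1 - d1) ^ 2 + (c2 - d2) ^ 2 = r ^ 2) : False := by
  have hbc' : b1 * c1 + b2 * c2 = r ^ 2 / 2 := by linear_combination (Hab + Hac - Hbc) / 2
  have hbd' : b1 * d1 + b2 * d2 = r ^ 2 / 2 := by linear_combination (Hab + Had - Hbd) / 2
  have hcd' : c1 * d1 + c2 * d2 = r ^ 2 / 2 := by linear_combination (Hac + Had - Hcd) / 2
  have hX : (b1 * c2 - b2 * c1) ^ 2 = 3 / 4 * r ^ 4 := by
    linear_combination (c1 ^ 2 + c2 ^ 2) * Hab + r ^ 2 * Hac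
      - (b1 * c1 + b2 * c2 + r ^ 2 / 2) * hbc'
  have hY : (b1 * d2 - b2 * d1) ^ 2 = 3 / 4 * r ^ 4 := by
    linear_combination (d1 ^ 2 + d2 ^ 2) * Hab + r ^ 2 * Had
      - (b1 * d1 + b2 * d2 + r ^ 2 / 2) * hbd'
  have hXY : (b1 * c2 - b2 * c1) * (b1 * d2 - b2 * d1) = r ^ 4 / 4 := by
    linear_combination (c1 * d1 + c2 * d2) * Hab + r ^ 2 * hcd'
      - (b1 * d1 + b2 * d2) * hbc' - (r ^ 2 / 2) * hbd'
  have h1 : ((b1 * c2 - b2 * c1) * (b1 * d2 - b2 * d1)) ^ 2 = 9 / 16 * r ^ 8 := by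
    rw [mul_pow, hX, hY]; ring
  rw [hXY] at h1
  nlinarith [pow_pos hr 8]

lemma no_equilateral_four (a b c d : ℂ) (r : ℝ) (hr : 0 < r)
    (hab : dist a b = r) (hac : dist a c = r) (had : dist a d = r)
    (hbc : dist b c = r) (hbd : dist b d = r) (hcd : dist c d = r) : False := by
  apply no_equilateral_coords (b.re - a.re) (b.im - a.im) (c.re - a.re) (c.im - a.im)
    (d.re - a.re) (d.im - a.im) r hr
  · have h := dist_sq_complex' b a; rw [dist_comm b a, hab] at h; linear_combination h
  · have h := dist_sq_complex' c a; rw [dist_comm c a, hac] at h; linear_combination h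
  · have h := dist_sq_complex' d a; rw [dist_comm d a, had] at h; linear_combination h
  · have h := dist_sq_complex' b c; rw [hbc] at h; linear_combination h
  · have h := dist_sq_complex' b d; rw [hbd] at h; linear_combination h
  · have h := dist_sq_complex' c d; rw [hcd] at h; linear_combination h

/-- If `P ⊂ ℂ` is a finite set of `t ≥ 2` points, then the minimal distance between
two distinct points of `P` is `< (2 / √t) * diam P`: there exist two distinct points
of `P` at distance `< (2 / √t) * diam P`. -/
theorem stmt_1 (P : Finset ℂ) (t : ℕ) (ht : 2 ≤ t) (hcard : P.card = t) :
    ∃ x ∈ P, ∃ y ∈ P, x ≠ y ∧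
      dist x y < 2 / Real.sqrt t * Metric.diam (P : Set ℂ) := by
  have hbd : Bornology.IsBounded (P : Set ℂ) := (P.finite_toSet).isBounded
  set D := Metric.diam (P : Set ℂ) with hDdef
  have hdle : ∀ p ∈ P, ∀ q ∈ P, dist p q ≤ D := fun p hp q hq =>
    Metric.dist_le_diam_of_mem hbd hp hq
  obtain ⟨a0, ha0, b0, hb0, hab0⟩ := Finset.one_lt_card.mp
    (by omega : 1 < P.card)
  have hD : 0 < D := lt_of_lt_of_le (dist_pos.mpr hab0) (hdle a0 ha0 b0 hb0)
  have htposR : (0:ℝ) < t := by exact_mod_cast (by omega : 0 < t)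
  have hspos : 0 < Real.sqrt t := Real.sqrt_pos.mpr htposR
  rcases lt_or_ge t 4 with h4 | h4
  · -- t = 2 or 3 : trivial since 2/√t > 1
    refine ⟨a0, ha0, b0, hb0, hab0, ?_⟩
    have hlt : Real.sqrt t < 2 := by
      rw [Real.sqrt_lt' (by norm_num : (0:ℝ) < 2)]
      have : (t:ℝ) < 4 := by exact_mod_cast h4
      nlinarith
    have h1 : (1:ℝ) < 2 / Real.sqrt t := (one_lt_div hspos).mpr hlt
    calc dist a0 b0 ≤ D := hdle a0 ha0 b0 hb0
    _ = 1 * D := (one_mul D).symm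
    _ < 2 / Real.sqrt t * D := by
        exact mul_lt_mul_of_pos_right h1 hD
  rcases eq_or_lt_of_le h4 with h4' | h5
  · -- t = 4
    subst h4'
    have hs4 : Real.sqrt ((4:ℕ):ℝ) = 2 := by
      rw [show ((4:ℕ):ℝ) = 2 ^ 2 by norm_num]
      exact Real.sqrt_sq (by norm_num)
    by_contra hcon
    push_neg at hcon
    have hall : ∀ x ∈ P, ∀ y ∈ P, x ≠ y → dist x y = D := by
      intro x hx y hy hxy
      refine le_antisymm (hdle x hx y hy) ?_
      have := hcon x hx y hy hxy
      rw [hs4] at this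
      norm_num at this
      linarith
    obtain ⟨a, ha⟩ : P.Nonempty := ⟨a0, ha0⟩
    have h3 : (P.erase a).card = 3 := by
      rw [Finset.card_erase_of_mem ha, hcard]
    obtain ⟨x, y, z, hxy, hxz, hyz, hPxyz⟩ := Finset.card_eq_three.mp h3
    have hxmem : x ∈ P.erase a := by rw [hPxyz]; simp
    have hymem : y ∈ P.erase a := by rw [hPxyz]; simp
    have hzmem : z ∈ P.erase a := by rw [hPxyz]; simp
    obtain ⟨hxa, hxP⟩ := Finset.mem_erase.mp hxmem
    obtain ⟨hya, hyP⟩ := Finset.mem_erase.mp hymem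
    obtain ⟨hza, hzP⟩ := Finset.mem_erase.mp hzmem
    exact no_equilateral_four a x y z D hD
      (hall a ha x hxP (Ne.symm hxa)) (hall a ha y hyP (Ne.symm hya))
      (hall a ha z hzP (Ne.symm hza)) (hall x hxP y hyP hxy)
      (hall x hxP z hzP hxz) (hall y hyP z hzP hyz)
  -- now t ≥ 5
  rcases eq_or_ne t 8 with h8 | h8
  · subst h8
    exact grid_lemma P 8 2 3 (by norm_num) (by norm_num) hcard (by norm_num) (by norm_num)
  rcases eq_or_ne t 9 with h9 | h9
  · subst h9
    exact grid_lemma P 9 2 4 (by norm_num) (by norm_num) hcard (by norm_num) (by norm_num)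
  -- generic case : k = ⌊√(t-1)⌋
  set k := Nat.sqrt (t - 1) with hk
  have hk2 : 2 ≤ k := Nat.le_sqrt.mpr (by omega)
  have hkk : k * k ≤ t - 1 := by
    have h := Nat.sqrt_le' (t - 1)
    nlinarith [h]
  have ht2k : t < 2 * (k * k) := by
    rcases le_or_gt t 7 with h7 | h7
    · nlinarith [Nat.mul_le_mul hk2 hk2]
    · have h10 : 10 ≤ t := by omega
      have hk3 : 3 ≤ k := Nat.le_sqrt.mpr (by omega)
      have hub : t - 1 < (k + 1) * (k + 1) := Nat.lt_succ_sqrt (t - 1)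
      have hub' : t ≤ (k + 1) * (k + 1) :=
        le_trans (by omega : t ≤ t - 1 + 1) (Nat.succ_le_of_lt hub)
      have hexp : (k + 1) * (k + 1) = k * k + 2 * k + 1 := by ring
      have h3k : 3 * k ≤ k * k := Nat.mul_le_mul_right k hk3
      nlinarith [hub', hexp, h3k]
  exact grid_lemma P t k k (by omega) (by omega) hcard (by omega)
    (by nlinarith)
end

section
/- For natural numbers s → ∞, ψ(π·(d*)²/ln(4(s+1))) = O(ln ln s); concretely, there are constants c₁, c₂ > 0 (depending on d*) such that for all sufficiently large s, ψ((d*)²π/ln(4(s+1))) ≥ c₁·ln ln s − c₂, where ψ is the inverse of x ↦ (2/x)·arcsin(e^{−x/2}). -/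
/-- Quantified asymptotics of Theorem 3.7: for a fixed integer `d* ≥ 1`, there are
constants `c₁, c₂ > 0` such that for all sufficiently large `s`,
`ψ((d*)² π / ln(4(s+1))) ≥ c₁ ln ln s − c₂`, where `ψ` is the inverse of
`x ↦ (2/x) arcsin(e^{−x/2})` on `(0, ∞)`. -/
theorem stmt_19 (dstar : ℕ) (hd : 1 ≤ dstar) (ψ : ℝ → ℝ)
    (hψpos : ∀ y > 0, 0 < ψ y)
    (hinv : ∀ x > 0, ψ (2 * Real.arcsin (Real.exp (-x / 2)) / x) = x)
    (hinv' : ∀ y > 0, 2 * Real.arcsin (Real.exp (-(ψ y) / 2)) / (ψ y) = y) :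
    ∃ c₁ > (0 : ℝ), ∃ c₂ > (0 : ℝ), ∃ N : ℕ, ∀ s : ℕ, N ≤ s →
      c₁ * Real.log (Real.log s) - c₂ ≤
        ψ ((dstar : ℝ) ^ 2 * Real.pi / Real.log (4 * (s + 1))) := by
  have hdpos : (0:ℝ) < (dstar:ℝ)^2 := by positivity
  have hd1 : (1:ℝ) ≤ (dstar:ℝ)^2 := by
    have : (1:ℝ) ≤ (dstar:ℝ) := by exact_mod_cast hd
    nlinarith
  have hA : (1:ℝ) < (dstar:ℝ)^2 * Real.pi / 2 := by
    nlinarith [Real.pi_gt_three]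
  refine ⟨2/3, by norm_num, (2/3) * Real.log ((dstar:ℝ)^2 * Real.pi / 2),
    by have := Real.log_pos hA; linarith, 3, ?_⟩
  intro s hs
  -- basic positivity facts
  have hs3 : (3:ℝ) ≤ (s:ℝ) := by exact_mod_cast hs
  have hLs : (0:ℝ) < Real.log s := Real.log_pos (by linarith)
  have hL : (0:ℝ) < Real.log (4 * ((s:ℝ) + 1)) := Real.log_pos (by linarith)
  set L := Real.log (4 * ((s:ℝ) + 1)) with hLdef
  set y := (dstar:ℝ)^2 * Real.pi / L with hy
  have hypos : 0 < y := by
    have := Real.pi_pos; positivity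
  have hp : 0 < ψ y := hψpos y hypos
  set p := ψ y with hpdef
  -- from hinv' : 2 * arcsin(e^{-p/2}) / p = y
  have h1 : Real.arcsin (Real.exp (-p / 2)) = y * p / 2 := by
    have := hinv' y hypos
    rw [← hpdef] at this
    field_simp at this ⊢
    linarith
  have hexp_le : Real.exp (-p/2) ≤ y * p / 2 := by
    have hmem : Real.exp (-p/2) ≤ 1 := by
      rw [Real.exp_le_one_iff]; linarith
    have hmem' : -1 ≤ Real.exp (-p/2) := by linarith [Real.exp_pos (-p/2)]
    have hsin : Real.sin (Real.arcsin (Real.exp (-p/2))) = Real.exp (-p/2) :=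
      Real.sin_arcsin hmem' hmem
    rw [h1] at hsin
    have h0 : 0 ≤ y * p / 2 := by positivity
    calc Real.exp (-p/2) = Real.sin (y * p / 2) := hsin.symm
      _ ≤ y * p / 2 := Real.sin_le h0
  -- take logs : -p/2 ≤ log y + log p - log 2
  have hlog : -p/2 ≤ Real.log y + Real.log p - Real.log 2 := by
    have := Real.log_le_log (Real.exp_pos _) hexp_le
    rw [Real.log_exp] at this
    have h2 : Real.log (y * p / 2) = Real.log y + Real.log p - Real.log 2 := by
      rw [Real.log_div (by positivity) (by norm_num), Real.log_mul (ne_of_gt hypos) (ne_of_gt hp)]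
    linarith [this, h2 ▸ this]
  have hlogp : Real.log p ≤ p := (Real.log_le_sub_one_of_pos hp).trans (by linarith)
  -- p ≥ (2/3)(log 2 - log y)
  have hkey : (2/3) * (Real.log 2 - Real.log y) ≤ p := by linarith
  -- log y = log(d²π) - log L
  have hlogy : Real.log y = Real.log ((dstar:ℝ)^2 * Real.pi) - Real.log L := by
    rw [hy, Real.log_div (by have := Real.pi_pos; positivity) (ne_of_gt hL)]
  -- log log s ≤ log L
  have hmono : Real.log (Real.log s) ≤ Real.log L := by
    apply Real.log_le_log hLs
    apply Real.log_le_log (by linarith)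
    linarith
  have hsplit : Real.log ((dstar:ℝ)^2 * Real.pi / 2)
      = Real.log ((dstar:ℝ)^2 * Real.pi) - Real.log 2 := by
    rw [Real.log_div (by have := Real.pi_pos; positivity) (by norm_num)]
  rw [hsplit]
  linarith [hkey]
end
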